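/- arXiv:2505.12240 — 4 statements merged into one kernel-verified Lean document; each statement's English description precedes it below -/
import Mathlib

section
/- The map T : ℝ² → ℝ² defined by T(x) = τ(|x|²) x is of class C¹, and its Jacobian matrix is DT(x) = τ(|x|²) ( I₂ + (1/(h² + h√(h²+|x|²))) [[x1², x1 x2],[x1 x2, x2²]] ). -/
/-- The map `T(x) = τ(|x|²) x` is `C¹` and its Jacobian at `x` is
`τ(|x|²)(I₂ + (1/(h²+h√(h²+|x|²))) [[x₁², x₁x₂],[x₁x₂, x₂²]])`, i.e. the linear map
`v ↦ τ(|x|²)(v + (1/(h²+h√(h²+|x|²))) (x·v) x)`. -/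
theorem T_contDiff_jacobian (h : ℝ) (hh : 0 < h) :
    let g : ℝ → ℝ := fun s => 1 / (2 * (h * Real.sqrt (s + h ^ 2) + h ^ 2))
    let τ : ℝ → ℝ := fun s => Real.exp (∫ z in (0:ℝ)..s, g z)
    let T : ℝ × ℝ → ℝ × ℝ := fun x =>
      (τ (x.1 ^ 2 + x.2 ^ 2) * x.1, τ (x.1 ^ 2 + x.2 ^ 2) * x.2)
    ContDiff ℝ 1 T ∧
    ∀ x : ℝ × ℝ, ∃ L : ℝ × ℝ →L[ℝ] ℝ × ℝ,
      (∀ v : ℝ × ℝ, L v = τ (x.1 ^ 2 + x.2 ^ 2) •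
        (v + (1 / (h ^ 2 + h * Real.sqrt (h ^ 2 + (x.1 ^ 2 + x.2 ^ 2)))) •
          ((x.1 * v.1 + x.2 * v.2) • x))) ∧
      HasFDerivAt T L x := by
  intro g τ T
  have hden : ∀ s : ℝ, 0 < 2 * (h * Real.sqrt (s + h ^ 2) + h ^ 2) := by
    intro s
    have := Real.sqrt_nonneg (s + h ^ 2)
    positivity
  have hg_cont : Continuous g := by
    apply Continuous.div continuous_const ?_ (fun s => ne_of_gt (hden s))
    fun_prop
  set F : ℝ → ℝ := fun s => ∫ z in (0:ℝ)..s, g z with hF_def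
  have hF : ∀ s : ℝ, HasDerivAt F (g s) s := fun s =>
    (hg_cont.integral_hasStrictDerivAt 0 s).hasDerivAt
  have hFdiff : Differentiable ℝ F := fun s => (hF s).differentiableAt
  have hτ : ∀ s : ℝ, HasDerivAt τ (Real.exp (F s) * g s) s := fun s => (hF s).exp
  have hτ_cd : ContDiff ℝ 1 τ := by
    rw [contDiff_one_iff_deriv]
    refine ⟨fun s => (hτ s).differentiableAt, ?_⟩
    have : deriv τ = fun s => Real.exp (F s) * g s := funext fun s => (hτ s).deriv
    rw [this]
    exact (Real.continuous_exp.comp hFdiff.continuous).mul hg_cont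
  have hq_cd : ContDiff ℝ 1 (fun x : ℝ × ℝ => x.1 ^ 2 + x.2 ^ 2) :=
    ((contDiff_fst.pow 2).add (contDiff_snd.pow 2))
  have hτq : ContDiff ℝ 1 (fun x : ℝ × ℝ => τ (x.1 ^ 2 + x.2 ^ 2)) := hτ_cd.comp hq_cd
  refine ⟨(hτq.mul contDiff_fst).prodMk (hτq.mul contDiff_snd), fun x => ?_⟩
  set q0 : ℝ := x.1 ^ 2 + x.2 ^ 2 with hq0
  have hq' : HasFDerivAt (fun y : ℝ × ℝ => y.1 ^ 2 + y.2 ^ 2)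
      ((x.1 • (ContinuousLinearMap.fst ℝ ℝ ℝ) + x.1 • (ContinuousLinearMap.fst ℝ ℝ ℝ)) +
       (x.2 • (ContinuousLinearMap.snd ℝ ℝ ℝ) + x.2 • (ContinuousLinearMap.snd ℝ ℝ ℝ))) x := by
    have h1 : HasFDerivAt (fun y : ℝ × ℝ => y.1 * y.1)
        (x.1 • (ContinuousLinearMap.fst ℝ ℝ ℝ) + x.1 • (ContinuousLinearMap.fst ℝ ℝ ℝ)) x :=
      hasFDerivAt_fst.mul hasFDerivAt_fst
    have h2 : HasFDerivAt (fun y : ℝ × ℝ => y.2 * y.2)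
        (x.2 • (ContinuousLinearMap.snd ℝ ℝ ℝ) + x.2 • (ContinuousLinearMap.snd ℝ ℝ ℝ)) x :=
      hasFDerivAt_snd.mul hasFDerivAt_snd
    have := h1.add h2
    have e : (fun y : ℝ × ℝ => y.1 ^ 2 + y.2 ^ 2) = ((fun y : ℝ × ℝ => y.1 * y.1) + fun y : ℝ × ℝ => y.2 * y.2) := by
      funext y
      simp only [Pi.add_apply]
      ring
    rw [e]
    exact this
  set Dq := ((x.1 • (ContinuousLinearMap.fst ℝ ℝ ℝ) + x.1 • (ContinuousLinearMap.fst ℝ ℝ ℝ)) +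
       (x.2 • (ContinuousLinearMap.snd ℝ ℝ ℝ) + x.2 • (ContinuousLinearMap.snd ℝ ℝ ℝ))) with hDq
  have hfc : HasFDerivAt (fun y : ℝ × ℝ => τ (y.1 ^ 2 + y.2 ^ 2))
      ((Real.exp (F q0) * g q0) • Dq) x :=
    (hτ q0).comp_hasFDerivAt (f := fun y : ℝ × ℝ => y.1 ^ 2 + y.2 ^ 2) x hq'
  have H1 := hfc.mul (hasFDerivAt_fst (p := x))
  have H2 := hfc.mul (hasFDerivAt_snd (p := x))
  refine ⟨_, ?_, (H1.prodMk H2)⟩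
  intro v
  have hDqv : ∀ w : ℝ × ℝ, Dq w = 2 * x.1 * w.1 + 2 * x.2 * w.2 := by
    intro w
    simp [hDq, ContinuousLinearMap.add_apply, ContinuousLinearMap.smul_apply]
    ring
  have hsqrt : Real.sqrt (h ^ 2 + q0) = Real.sqrt (q0 + h ^ 2) := by rw [add_comm]
  have hne : h * Real.sqrt (q0 + h ^ 2) + h ^ 2 ≠ 0 := by
    have := Real.sqrt_nonneg (q0 + h ^ 2); positivity
  have hτ0 : τ q0 = Real.exp (F q0) := rfl
  simp only [ContinuousLinearMap.prod_apply, ContinuousLinearMap.add_apply,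
    ContinuousLinearMap.smul_apply, ContinuousLinearMap.coe_fst', ContinuousLinearMap.coe_snd',
    smul_eq_mul, Prod.smul_mk, Prod.mk_add_mk, hτ0, hDqv, hsqrt, g]
  apply Prod.ext <;> simp [Prod.smul_def, smul_eq_mul] <;> field_simp <;> ring
end

section
/- Let ω : ℝ² → [0, M/ε²] be measurable with compact support and ∫ω = γ > 0, and set r_ε = ε√(γ/(πM)). Then for every x ∈ ℝ², ∫ ln|x−y|⁻¹ ω(y) dy ≤ (M/ε²)∫₀^{r_ε} 2πr ln(1/r) dr = γ ln(1/r_ε) + γ/2; in particular ∫ ln|x−y| ω(y) dy ≥ γ ln ε − C(γ, M) for a constant C depending only on γ and M. -/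
open MeasureTheory Real

section AuxLemmas

open Set Metric

private noncomputable def bfun : ℝ → ℝ := fun t => |Real.log (abs t)|

private lemma bfun_meas : Measurable bfun :=
  (Real.measurable_log.comp measurable_abs).abs

private lemma bfun_nonneg (t : ℝ) : 0 ≤ bfun t := abs_nonneg _

private lemma aux_log_int : IntegrableOn Real.log (Set.Ioc (0:ℝ) 1) := by
  have h : IntegrableOn (fun r : ℝ => -Real.log r) (Set.Ioc 0 1) := by
    apply intervalIntegral.integrableOn_deriv_of_nonneg (g := fun r : ℝ => r - r * Real.log r)
    · exact (continuous_id.sub Real.continuous_mul_log).continuousOn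
    · intro x hx
      have h1 : HasDerivAt (fun r : ℝ => r - r * Real.log r) (1 - (Real.log x + 1)) x :=
        (hasDerivAt_id x).sub (Real.hasDerivAt_mul_log hx.1.ne')
      exact h1.congr_deriv (by ring)
    · intro x hx
      simp only [neg_nonneg]
      exact Real.log_nonpos hx.1.le hx.2.le
  have h2 : Real.log = (fun r : ℝ => -(-Real.log r)) := by funext r; ring
  rw [h2]
  exact h.neg

private lemma aux_bfun_int : Integrable ((Set.Ioo (-1:ℝ) 1).indicator bfun) := by
  have h1 : IntegrableOn bfun (Set.Ioc 0 1) :=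
    IntegrableOn.congr_fun aux_log_int.abs
      (fun t ht => by simp [bfun, abs_of_pos ht.1]) measurableSet_Ioc
  have h2 : Integrable ((Set.Ioc (0:ℝ) 1).indicator bfun) :=
    (integrable_indicator_iff measurableSet_Ioc).2 h1
  have h3 := h2.comp_neg
  have h3' : (fun t : ℝ => (Set.Ioc (0:ℝ) 1).indicator bfun (-t))
      = (Set.Ico (-1:ℝ) 0).indicator bfun := by
    funext t
    unfold Set.indicator
    simp only [Set.mem_Ioc, Set.mem_Ico]
    by_cases h : 0 < -t ∧ -t ≤ 1
    · rw [if_pos h, if_pos ⟨by linarith [h.2], by linarith [h.1]⟩]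
      simp [bfun, abs_neg]
    · rw [if_neg h, if_neg (fun hc => h ⟨by linarith [hc.2], by linarith [hc.1]⟩)]
  rw [h3'] at h3
  apply Integrable.mono' (h2.add h3)
  · exact (bfun_meas.indicator measurableSet_Ioo).aestronglyMeasurable
  · filter_upwards [compl_mem_ae_iff.2 (measure_singleton (0:ℝ))] with t ht
    simp only [Set.mem_compl_iff, Set.mem_singleton_iff] at ht
    rw [Real.norm_eq_abs, abs_of_nonneg (Set.indicator_nonneg (fun a _ => bfun_nonneg a) t)]
    by_cases hmem : t ∈ Set.Ioo (-1:ℝ) 1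
    · rw [Set.indicator_of_mem hmem]
      rcases lt_or_gt_of_ne ht with hneg | hpos
      · rw [Pi.add_apply,
          Set.indicator_of_notMem (fun hc : t ∈ Set.Ioc (0:ℝ) 1 => absurd hc.1 (by linarith)),
          Set.indicator_of_mem (show t ∈ Set.Ico (-1:ℝ) 0 from ⟨hmem.1.le, hneg⟩) bfun]
        simp
      · rw [Pi.add_apply,
          Set.indicator_of_mem (show t ∈ Set.Ioc (0:ℝ) 1 from ⟨hpos, hmem.2.le⟩) bfun,
          Set.indicator_of_notMem (fun hc : t ∈ Set.Ico (-1:ℝ) 0 => absurd hc.2 (by linarith))]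
        simp
    · rw [Set.indicator_of_notMem hmem]
      exact add_nonneg (Set.indicator_nonneg (fun a _ => bfun_nonneg a) t)
        (Set.indicator_nonneg (fun a _ => bfun_nonneg a) t)

private noncomputable def psi : ℝ × ℝ → EuclideanSpace ℝ (Fin 2) :=
  fun p => (MeasurableEquiv.toLp 2 (Fin 2 → ℝ)) (MeasurableEquiv.finTwoArrow.symm p)

private lemma psi_mp : MeasurePreserving psi volume volume :=
  ((EuclideanSpace.volume_preserving_symm_measurableEquiv_toLp (Fin 2)).symm).comp
    (volume_preserving_finTwoArrow ℝ).symm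

private lemma psi_emb : MeasurableEmbedding psi :=
  ((MeasurableEquiv.toLp 2 (Fin 2 → ℝ)).measurableEmbedding).comp
    (MeasurableEquiv.finTwoArrow.symm.measurableEmbedding)

private lemma psi_norm (p : ℝ × ℝ) : ‖psi p‖ = Real.sqrt (p.1^2 + p.2^2) := by
  rw [EuclideanSpace.norm_eq]
  congr 1
  rw [Fin.sum_univ_two]
  norm_num [psi, MeasurableEquiv.coe_toLp, MeasurableEquiv.finTwoArrow, sq_abs]

private lemma psi_fst (p : ℝ × ℝ) : |p.1| ≤ ‖psi p‖ := by
  rw [psi_norm, ← Real.sqrt_sq_eq_abs]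
  exact Real.sqrt_le_sqrt (by nlinarith [sq_nonneg p.2])

private lemma psi_snd (p : ℝ × ℝ) : |p.2| ≤ ‖psi p‖ := by
  rw [psi_norm, ← Real.sqrt_sq_eq_abs]
  exact Real.sqrt_le_sqrt (by nlinarith [sq_nonneg p.1])

private lemma log_int_ball1 :
    IntegrableOn (fun z : EuclideanSpace ℝ (Fin 2) => Real.log ‖z‖) (Metric.ball 0 1) := by
  rw [← integrable_indicator_iff measurableSet_ball]
  set g : EuclideanSpace ℝ (Fin 2) → ℝ :=
    (Metric.ball (0 : EuclideanSpace ℝ (Fin 2)) 1).indicator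
      (fun z => Real.log ‖z‖) with hg
  have hgmeas : Measurable g :=
    (Real.measurable_log.comp measurable_norm).indicator measurableSet_ball
  rw [← psi_mp.integrable_comp_emb psi_emb]
  set H : ℝ × ℝ → ℝ := fun p =>
    (Set.Ioo (-1:ℝ) 1).indicator bfun p.1 * (Set.Ioo (-1:ℝ) 1).indicator (fun _ => (1:ℝ)) p.2
    with hH
  have hHint : Integrable H := by
    rw [show (volume : Measure (ℝ × ℝ)) = volume.prod volume from (Measure.volume_eq_prod _ _)]
    exact Integrable.mul_prod aux_bfun_int
      ((integrable_indicator_iff measurableSet_Ioo).2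
        (integrableOn_const measure_Ioo_lt_top.ne))
  have hnull : (volume : Measure (ℝ × ℝ)) {p : ℝ × ℝ | p.1 = 0} = 0 := by
    have h0 : {p : ℝ × ℝ | p.1 = 0} = ({0} : Set ℝ) ×ˢ (Set.univ : Set ℝ) := by
      ext ⟨a,b⟩; simp [eq_comm]
    rw [h0, show (volume : Measure (ℝ × ℝ)) = volume.prod volume from (Measure.volume_eq_prod _ _),
      Measure.prod_prod]
    simp
  apply Integrable.mono' hHint ((hgmeas.comp psi_emb.measurable).aestronglyMeasurable)
  · rw [ae_iff]
    refine measure_mono_null ?_ hnull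
    intro p hp
    simp only [Set.mem_setOf_eq] at hp ⊢
    by_contra hp1
    apply hp
    have hp1' : 0 < |p.1| := abs_pos.2 hp1
    rw [Function.comp_apply, Real.norm_eq_abs]
    by_cases hmem : psi p ∈ Metric.ball (0 : EuclideanSpace ℝ (Fin 2)) 1
    · have hlt : ‖psi p‖ < 1 := by rwa [Metric.mem_ball, dist_zero_right] at hmem
      have h1 : |p.1| < 1 := lt_of_le_of_lt (psi_fst p) hlt
      have h2 : |p.2| < 1 := lt_of_le_of_lt (psi_snd p) hlt
      have hmem1 : p.1 ∈ Set.Ioo (-1:ℝ) 1 := abs_lt.1 h1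
      have hmem2 : p.2 ∈ Set.Ioo (-1:ℝ) 1 := abs_lt.1 h2
      simp only [hH, hg, Function.comp_apply, Set.indicator_of_mem hmem,
        Set.indicator_of_mem hmem1, Set.indicator_of_mem hmem2, mul_one]
      have hnormpos : 0 < ‖psi p‖ := lt_of_lt_of_le hp1' (psi_fst p)
      have hlog1 : Real.log ‖psi p‖ ≤ 0 := Real.log_nonpos hnormpos.le hlt.le
      have hlog2 : Real.log |p.1| ≤ Real.log ‖psi p‖ := Real.log_le_log hp1' (psi_fst p)
      rw [abs_of_nonpos hlog1, show bfun p.1 = |Real.log (abs p.1)| from rfl,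
        abs_of_nonpos (le_trans hlog2 hlog1)]
      linarith
    · simp only [hH, hg, Function.comp_apply, Set.indicator_of_notMem hmem, abs_zero]
      exact mul_nonneg (Set.indicator_nonneg (fun a _ => bfun_nonneg a) _)
        (Set.indicator_nonneg (fun _ _ => zero_le_one) _)

private lemma log_int_ball (R : ℝ) :
    IntegrableOn (fun z : EuclideanSpace ℝ (Fin 2) => Real.log ‖z‖) (Metric.ball 0 R) := by
  have hsub : Metric.ball (0 : EuclideanSpace ℝ (Fin 2)) R ⊆
      Metric.ball 0 1 ∪ (Metric.ball (0 : EuclideanSpace ℝ (Fin 2)) R \ Metric.ball 0 1) := by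
    intro z hz
    by_cases h : z ∈ Metric.ball (0 : EuclideanSpace ℝ (Fin 2)) 1
    · exact Or.inl h
    · exact Or.inr ⟨hz, h⟩
  apply IntegrableOn.mono_set _ hsub
  apply IntegrableOn.union log_int_ball1
  have hmeas : MeasurableSet (Metric.ball (0 : EuclideanSpace ℝ (Fin 2)) R \ Metric.ball 0 1) :=
    measurableSet_ball.diff measurableSet_ball
  apply Integrable.mono' (g := fun _ => |Real.log R|)
  · exact integrableOn_const (lt_of_le_of_lt (measure_mono diff_subset)
      measure_ball_lt_top).ne
  · exact ((Real.measurable_log.comp measurable_norm).aestronglyMeasurable).restrict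
  · filter_upwards [ae_restrict_mem hmeas] with z hz
    have h1 : 1 ≤ ‖z‖ := by
      have := hz.2; rwa [Metric.mem_ball, dist_zero_right, not_lt] at this
    have h2 : ‖z‖ < R := by
      have := hz.1; rwa [Metric.mem_ball, dist_zero_right] at this
    rw [Real.norm_eq_abs, abs_of_nonneg (Real.log_nonneg h1)]
    calc Real.log ‖z‖ ≤ Real.log R := Real.log_le_log (by linarith) h2.le
    _ ≤ |Real.log R| := le_abs_self _

private lemma logball_int (R : ℝ) :
    Integrable ((Metric.ball (0 : EuclideanSpace ℝ (Fin 2)) R).indicator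
      (fun z => Real.log (1 / ‖z‖))) := by
  rw [integrable_indicator_iff measurableSet_ball]
  have h := (log_int_ball R).neg
  apply IntegrableOn.congr_fun h _ measurableSet_ball
  intro z _
  simp [one_div, Real.log_inv]

private lemma e2_vol_ball (x : EuclideanSpace ℝ (Fin 2)) (r : ℝ) (hr : 0 ≤ r) :
    (volume (Metric.ball x r)).toReal = π * r ^ 2 := by
  rw [EuclideanSpace.volume_ball]
  simp only [Fintype.card_fin]
  rw [show ((2:ℕ) : ℝ) / 2 + 1 = 2 by norm_num]
  rw [Real.Gamma_two, div_one, Real.sq_sqrt Real.pi_nonneg]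
  rw [← ENNReal.ofReal_pow hr, ← ENNReal.ofReal_mul (by positivity)]
  rw [ENNReal.toReal_ofReal (by positivity)]
  ring

private lemma ball_integral_val (R : ℝ) (hR : 0 < R) :
    ∫ z : EuclideanSpace ℝ (Fin 2),
      (Metric.ball (0 : EuclideanSpace ℝ (Fin 2)) R).indicator (fun z => Real.log (1/‖z‖)) z
    = ∫ r in (0:ℝ)..R, 2 * π * r * Real.log (1/r) := by
  have h1 : (fun z : EuclideanSpace ℝ (Fin 2) =>
      (Metric.ball (0 : EuclideanSpace ℝ (Fin 2)) R).indicator (fun z => Real.log (1/‖z‖)) z)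
      = fun z => (fun r : ℝ => if r < R then Real.log (1/r) else 0) ‖z‖ := by
    funext z
    by_cases h : ‖z‖ < R
    · rw [Set.indicator_of_mem (mem_ball_zero_iff.2 h)]; exact (if_pos h).symm
    · rw [Set.indicator_of_notMem (fun hc => h (mem_ball_zero_iff.1 hc))]
      exact (if_neg h).symm
  rw [h1, MeasureTheory.integral_fun_norm_addHaar volume
    (fun r : ℝ => if r < R then Real.log (1/r) else 0)]
  simp only [finrank_euclideanSpace_fin]
  rw [show volume.real (Metric.ball (0:EuclideanSpace ℝ (Fin 2)) 1) = π by
    rw [measureReal_def, e2_vol_ball 0 1 zero_le_one]; ring]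
  have h2 : ∫ y in Set.Ioi (0:ℝ), y ^ (2 - 1) • (if y < R then Real.log (1/y) else 0)
      = ∫ y in Set.Ioi (0:ℝ),
          (Set.Ioo (0:ℝ) R).indicator (fun r => r * Real.log (1/r)) y := by
    apply setIntegral_congr_fun measurableSet_Ioi
    intro y hy
    simp only [show (2-1:ℕ) = 1 from rfl, pow_one, smul_eq_mul]
    by_cases h : y < R
    · rw [if_pos h, Set.indicator_of_mem (show y ∈ Set.Ioo (0:ℝ) R from ⟨hy, h⟩)]
    · rw [if_neg h, Set.indicator_of_notMem (fun hc => h hc.2), mul_zero]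
  rw [h2, setIntegral_indicator measurableSet_Ioo,
    show Set.Ioi (0:ℝ) ∩ Set.Ioo 0 R = Set.Ioo 0 R by
      rw [Set.inter_eq_right]; exact fun y hy => hy.1]
  rw [← integral_Ioc_eq_integral_Ioo, ← intervalIntegral.integral_of_le hR.le]
  rw [show (fun r : ℝ => 2 * π * r * Real.log (1/r))
      = fun r : ℝ => (2 * π) * (r * Real.log (1/r)) by funext r; ring]
  rw [intervalIntegral.integral_const_mul]
  rw [nsmul_eq_mul, smul_eq_mul]
  push_cast
  ring

private lemma J_val (R : ℝ) (hR : 0 < R) :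
    ∫ r in (0:ℝ)..R, 2 * π * r * Real.log (1/r)
      = π * R ^ 2 * Real.log (1/R) + π * R ^ 2 / 2 := by
  have hcong : (fun r : ℝ => 2 * π * r * Real.log (1/r))
      = fun r : ℝ => (-2 * π) * (r * Real.log r) := by
    funext r; rw [one_div, Real.log_inv]; ring
  rw [hcong]
  set G : ℝ → ℝ := fun r => (-2 * π) * ((r * (r * Real.log r)) / 2 - r ^ 2 / 4) with hG
  have hcont : ContinuousOn G (Set.Icc 0 R) :=
    (continuous_const.mul (((continuous_id.mul Real.continuous_mul_log).div_const 2).sub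
      ((continuous_pow 2).div_const 4))).continuousOn
  have hderiv : ∀ x ∈ Set.Ioo (0:ℝ) R,
      HasDerivWithinAt G ((-2 * π) * (x * Real.log x)) (Set.Ioi x) x := by
    intro x hx
    have h : HasDerivAt G ((-2 * π) * ((1 * (x * Real.log x) + x * (Real.log x + 1)) / 2
        - 2 * x ^ 1 / 4)) x := by
      exact ((((hasDerivAt_id x).mul (Real.hasDerivAt_mul_log hx.1.ne')).div_const 2).sub
        ((hasDerivAt_pow 2 x).div_const 4)).const_mul _
    have h2 : HasDerivAt G ((-2 * π) * (x * Real.log x)) x := h.congr_deriv (by ring)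
    exact h2.hasDerivWithinAt
  have hint : IntervalIntegrable (fun r : ℝ => (-2 * π) * (r * Real.log r)) volume 0 R :=
    (continuous_const.mul Real.continuous_mul_log).intervalIntegrable 0 R
  have hFTC := intervalIntegral.integral_eq_sub_of_hasDeriv_right_of_le hR.le hcont hderiv hint
  rw [hFTC, hG]
  simp only
  rw [one_div, Real.log_inv]
  norm_num
  ring

end AuxLemmas

/-- Rearrangement bound on the logarithmic self-interaction: if `0 ≤ ω ≤ M/ε²`
has compact support and mass `γ`, and `r_ε = ε√(γ/(πM))`, then for all `x`,
`∫ ln|x−y|⁻¹ ω(y) dy ≤ (M/ε²)∫₀^{r_ε} 2πr ln(1/r) dr = γ ln(1/r_ε) + γ/2`;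
in particular `∫ ln|x−y| ω(y) dy ≥ γ ln ε − C` for a constant `C = C(γ, M)`. -/
theorem log_selfinteraction_bound (M γ : ℝ) (hM : 0 < M) (hγ : 0 < γ) :
    ∃ C : ℝ, ∀ ε : ℝ, 0 < ε → ε < 1 →
      ∀ ω : EuclideanSpace ℝ (Fin 2) → ℝ,
        Measurable ω → HasCompactSupport ω →
        (∀ y, 0 ≤ ω y) → (∀ y, ω y ≤ M / ε ^ 2) →
        (∫ y, ω y) = γ →
        let rε : ℝ := ε * Real.sqrt (γ / (π * M))
        (∀ x, (∫ y, Real.log (1 / ‖x - y‖) * ω y)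
            ≤ (M / ε ^ 2) * ∫ r in (0:ℝ)..rε, 2 * π * r * Real.log (1 / r)) ∧
        ((M / ε ^ 2) * (∫ r in (0:ℝ)..rε, 2 * π * r * Real.log (1 / r))
            = γ * Real.log (1 / rε) + γ / 2) ∧
        (∀ x, γ * Real.log ε - C ≤ ∫ y, Real.log ‖x - y‖ * ω y) := by
  have hπM : 0 < γ / (π * M) := div_pos hγ (mul_pos Real.pi_pos hM)
  have hsq : 0 < Real.sqrt (γ / (π * M)) := Real.sqrt_pos.2 hπM
  refine ⟨γ / 2 - γ * Real.log (Real.sqrt (γ / (π * M))), ?_⟩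
  intro ε hε hε1 ω hωmeas hωcs hωnn hωle hmass rε
  have hrε : rε = ε * Real.sqrt (γ / (π * M)) := rfl
  have hrpos : 0 < rε := mul_pos hε hsq
  have hε2 : (0:ℝ) < ε ^ 2 := by positivity
  have hc : 0 < M / ε ^ 2 := div_pos hM hε2
  have hr2 : rε ^ 2 = ε ^ 2 * (γ / (π * M)) := by
    rw [hrε, mul_pow, Real.sq_sqrt hπM.le]
  have hkey : (M / ε ^ 2) * (π * rε ^ 2) = γ := by
    rw [hr2]
    field_simp
  -- Part 2
  have hpart2 : (M / ε ^ 2) * (∫ r in (0:ℝ)..rε, 2 * π * r * Real.log (1 / r))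
      = γ * Real.log (1 / rε) + γ / 2 := by
    rw [J_val rε hrpos]
    linear_combination (Real.log (1 / rε) + 1 / 2) * hkey
  -- Integrability of ω
  obtain ⟨R₀, hR₀⟩ := hωcs.isBounded.subset_closedBall (0 : EuclideanSpace ℝ (Fin 2))
  have hωint : Integrable ω := by
    apply Integrable.mono'
      (g := (Metric.closedBall (0 : EuclideanSpace ℝ (Fin 2)) R₀).indicator
        (fun _ => M / ε ^ 2))
    · exact (integrable_indicator_iff measurableSet_closedBall).2
        (integrableOn_const measure_closedBall_lt_top.ne)
    · exact hωmeas.aestronglyMeasurable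
    · apply Filter.Eventually.of_forall
      intro y
      rw [Real.norm_eq_abs, abs_of_nonneg (hωnn y)]
      by_cases hy : y ∈ tsupport ω
      · rw [Set.indicator_of_mem (hR₀ hy)]; exact hωle y
      · rw [image_eq_zero_of_notMem_tsupport hy]
        exact Set.indicator_nonneg (fun _ _ => hc.le) y
  -- Part 1
  have hpart1 : ∀ x, (∫ y, Real.log (1 / ‖x - y‖) * ω y)
      ≤ (M / ε ^ 2) * ∫ r in (0:ℝ)..rε, 2 * π * r * Real.log (1 / r) := by
    intro x
    set c : ℝ := M / ε ^ 2 with hcdef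
    set L : ℝ := Real.log (1 / rε) with hLdef
    set f : EuclideanSpace ℝ (Fin 2) → ℝ := fun y => Real.log (1 / ‖x - y‖) with hfdef
    set g : EuclideanSpace ℝ (Fin 2) → ℝ :=
      (Metric.ball (0 : EuclideanSpace ℝ (Fin 2)) rε).indicator
        (fun z => Real.log (1 / ‖z‖)) with hgdef
    have hgint : Integrable g := logball_int rε
    have hgval : ∫ z, g z = ∫ r in (0:ℝ)..rε, 2 * π * r * Real.log (1 / r) :=
      ball_integral_val rε hrpos
    have hfm : Measurable f := by
      apply Real.measurable_log.comp
      exact measurable_const.div ((measurable_const.sub measurable_id).norm)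
    -- Integrability of f * ω
    set R₂ : ℝ := |R₀| + ‖x‖ + 1 with hR₂def
    have hRy : ∀ y ∈ tsupport ω, ‖x - y‖ < R₂ := by
      intro y hy
      have hy' : ‖y‖ ≤ R₀ := by
        have := hR₀ hy
        rwa [Metric.mem_closedBall, dist_zero_right] at this
      calc ‖x - y‖ ≤ ‖x‖ + ‖y‖ := norm_sub_le x y
      _ ≤ ‖x‖ + R₀ := by linarith
      _ < R₂ := by
        rw [hR₂def]
        have := le_abs_self R₀
        linarith
    set gR : EuclideanSpace ℝ (Fin 2) → ℝ :=
      (Metric.ball (0 : EuclideanSpace ℝ (Fin 2)) R₂).indicator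
        (fun z => Real.log (1 / ‖z‖)) with hgRdef
    have hDint : Integrable (fun y => c * |gR (x - y)|) :=
      (((logball_int R₂).abs).comp_sub_left x).const_mul c
    have hfωint : Integrable (fun y => f y * ω y) := by
      apply Integrable.mono' hDint ((hfm.mul hωmeas).aestronglyMeasurable)
      apply Filter.Eventually.of_forall
      intro y
      rw [Real.norm_eq_abs, Pi.mul_apply, abs_mul]
      by_cases hy : y ∈ tsupport ω
      · have hlt := hRy y hy
        have hgeq : gR (x - y) = f y :=
          Set.indicator_of_mem (mem_ball_zero_iff.2 hlt) _
        rw [hgeq]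
        calc |f y| * |ω y| ≤ |f y| * c := by
              apply mul_le_mul_of_nonneg_left _ (abs_nonneg _)
              rw [abs_of_nonneg (hωnn y)]
              exact hωle y
        _ = c * |f y| := mul_comm _ _
      · rw [image_eq_zero_of_notMem_tsupport hy, abs_zero, mul_zero]
        exact mul_nonneg hc.le (abs_nonneg _)
    -- auxiliary integrable pieces
    have hind_int : Integrable
        ((Metric.ball x rε).indicator (fun _ => (1:ℝ))) :=
      (integrable_indicator_iff measurableSet_ball).2
        (integrableOn_const measure_ball_lt_top.ne)
    have hgtrans : Integrable (fun y => g (x - y)) := hgint.comp_sub_left x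
    set h : EuclideanSpace ℝ (Fin 2) → ℝ := fun y =>
      c * g (x - y) + L * (ω y - c * (Metric.ball x rε).indicator (fun _ => (1:ℝ)) y)
      with hhdef
    have hhint : Integrable h :=
      (hgtrans.const_mul c).add (((hωint.sub (hind_int.const_mul c)).const_mul L))
    -- pointwise a.e. inequality
    have hxnull : volume ({x} : Set (EuclideanSpace ℝ (Fin 2))) = 0 := by
      refine measure_mono_null (show ({x} : Set (EuclideanSpace ℝ (Fin 2)))
        ⊆ Metric.closedBall x 0 by simp) ?_
      rw [EuclideanSpace.volume_closedBall]
      simp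
    have hae : ∀ᵐ y, f y * ω y ≤ h y := by
      filter_upwards [compl_mem_ae_iff.2 hxnull] with y hy
      simp only [Set.mem_compl_iff, Set.mem_singleton_iff] at hy
      have hyx : x - y ≠ 0 := sub_ne_zero.2 (Ne.symm hy)
      have ht : 0 < ‖x - y‖ := norm_pos_iff.2 hyx
      by_cases hcase : ‖x - y‖ < rε
      · have hyB : y ∈ Metric.ball x rε := by
          rw [Metric.mem_ball, dist_comm, dist_eq_norm]; exact hcase
        have hgx : g (x - y) = f y :=
          Set.indicator_of_mem (mem_ball_zero_iff.2 hcase) _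
        have hL : L ≤ f y := by
          rw [hLdef, hfdef]
          exact Real.log_le_log (by positivity) (one_div_le_one_div_of_le ht hcase.le)
        rw [hhdef]
        simp only [hgx, Set.indicator_of_mem hyB]
        have h1 : 0 ≤ (f y - L) * (c - ω y) :=
          mul_nonneg (by linarith) (by linarith [hωle y])
        nlinarith [h1]
      · have hyB : y ∉ Metric.ball x rε := by
          rw [Metric.mem_ball, dist_comm, dist_eq_norm]
          exact fun hcon => hcase hcon
        have hgx : g (x - y) = 0 :=
          Set.indicator_of_notMem (fun hcon => hcase (mem_ball_zero_iff.1 hcon)) _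
        have hL : f y ≤ L := by
          rw [hLdef, hfdef]
          exact Real.log_le_log (by positivity)
            (one_div_le_one_div_of_le hrpos (not_lt.1 hcase))
        rw [hhdef]
        simp only [hgx, Set.indicator_of_notMem hyB, mul_zero, sub_zero]
        have hstep := mul_le_mul_of_nonneg_right hL (hωnn y)
        linarith
    -- value of ∫ h
    have hhval : ∫ y, h y = c * ∫ r in (0:ℝ)..rε, 2 * π * r * Real.log (1 / r) := by
      have i1 : ∫ y, c * g (x - y) = c * ∫ r in (0:ℝ)..rε, 2 * π * r * Real.log (1 / r) := by
        rw [integral_const_mul, integral_sub_left_eq_self g volume x, hgval]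
      have i2 : ∫ y, (ω y - c * (Metric.ball x rε).indicator (fun _ => (1:ℝ)) y)
          = γ - c * (π * rε ^ 2) := by
        rw [integral_sub hωint (hind_int.const_mul c), hmass, integral_const_mul,
          integral_indicator_const (1:ℝ) measurableSet_ball,
          measureReal_def, e2_vol_ball x rε hrpos.le, smul_eq_mul, mul_one]
      have i3 : ∫ y, L * (ω y - c * (Metric.ball x rε).indicator (fun _ => (1:ℝ)) y)
          = L * (γ - c * (π * rε ^ 2)) := by
        rw [integral_const_mul, i2]
      have e1 : ∫ y, h y = (∫ y, c * g (x - y))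
          + ∫ y, L * (ω y - c * (Metric.ball x rε).indicator (fun _ => (1:ℝ)) y) :=
        integral_add (hgtrans.const_mul c) ((hωint.sub (hind_int.const_mul c)).const_mul L)
      rw [e1, i1, i3, show γ - c * (π * rε ^ 2) = 0 by linarith [hkey]]
      ring
    calc (∫ y, Real.log (1 / ‖x - y‖) * ω y) = ∫ y, f y * ω y := rfl
    _ ≤ ∫ y, h y := integral_mono_ae hfωint hhint hae
    _ = c * ∫ r in (0:ℝ)..rε, 2 * π * r * Real.log (1 / r) := hhval
    _ = (M / ε ^ 2) * ∫ r in (0:ℝ)..rε, 2 * π * r * Real.log (1 / r) := rfl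
  refine ⟨hpart1, hpart2, ?_⟩
  -- Part 3
  intro x
  have hneg : ∫ y, Real.log ‖x - y‖ * ω y = -∫ y, Real.log (1 / ‖x - y‖) * ω y := by
    rw [← integral_neg]
    congr 1
    funext y
    rw [one_div, Real.log_inv]
    ring
  have h1 := hpart1 x
  rw [hpart2] at h1
  have hlogr : Real.log rε = Real.log ε + Real.log (Real.sqrt (γ / (π * M))) := by
    rw [hrε, Real.log_mul hε.ne' hsq.ne']
  have hlog1r : Real.log (1 / rε) = -Real.log rε := by rw [one_div, Real.log_inv]
  rw [hneg]
  rw [hlog1r, hlogr] at h1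
  nlinarith [h1]
end

section
/- Let φ(s) = C e^{s/a} − s² with a, C > 0. If C < (2a/e)² then φ has exactly three real zeros η₁ < η₂ < η₃ satisfying η₁ < 0 < η₂ < 2a < η₃, while if C > (2a/e)² then φ has exactly one real zero η̄ < 0. -/
open Real Set

private lemma g_hasDeriv (a : ℝ) (ha : 0 < a) (s : ℝ) :
    HasDerivAt (fun s : ℝ => s ^ 2 * Real.exp (-s / a))
      (Real.exp (-s / a) * (s * (2 - s / a))) s := by
  have h1 : HasDerivAt (fun s : ℝ => s ^ 2) (2 * s) s := by
    simpa using (hasDerivAt_pow 2 s)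
  have h2 : HasDerivAt (fun s : ℝ => Real.exp (-s / a)) (Real.exp (-s / a) * (-1 / a)) s := by
    have : HasDerivAt (fun s : ℝ => -s / a) (-1 / a) s := by
      simpa using ((hasDerivAt_id s).neg.div_const a)
    exact (Real.hasDerivAt_exp _).comp s this
  have := h1.mul h2
  exact this.congr_deriv (by ring)

private lemma g_cont (a : ℝ) : Continuous (fun s : ℝ => s ^ 2 * Real.exp (-s / a)) := by
  continuity

private lemma g_anti1 (a : ℝ) (ha : 0 < a) :
    StrictAntiOn (fun s : ℝ => s ^ 2 * Real.exp (-s / a)) (Iic 0) := by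
  apply strictAntiOn_of_deriv_neg (convex_Iic 0) (g_cont a).continuousOn
  intro x hx
  rw [interior_Iic] at hx
  rw [(g_hasDeriv a ha x).deriv]
  have hx' : x < 0 := hx
  have h1 : (0:ℝ) < Real.exp (-x / a) := Real.exp_pos _
  have h2 : x / a < 0 := div_neg_of_neg_of_pos hx' ha
  nlinarith [mul_pos h1 (mul_pos (neg_pos.mpr hx') (by linarith : (0:ℝ) < 2 - x / a))]

private lemma g_mono (a : ℝ) (ha : 0 < a) :
    StrictMonoOn (fun s : ℝ => s ^ 2 * Real.exp (-s / a)) (Icc 0 (2 * a)) := by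
  apply strictMonoOn_of_deriv_pos (convex_Icc 0 (2 * a)) (g_cont a).continuousOn
  intro x hx
  rw [interior_Icc] at hx
  rw [(g_hasDeriv a ha x).deriv]
  have h1 : (0:ℝ) < Real.exp (-x / a) := Real.exp_pos _
  have h2 : 0 < 2 - x / a := by
    rw [sub_pos, div_lt_iff₀ ha]; nlinarith [hx.2]
  have := hx.1
  positivity

private lemma g_anti2 (a : ℝ) (ha : 0 < a) :
    StrictAntiOn (fun s : ℝ => s ^ 2 * Real.exp (-s / a)) (Ici (2 * a)) := by
  apply strictAntiOn_of_deriv_neg (convex_Ici (2 * a)) (g_cont a).continuousOn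
  intro x hx
  rw [interior_Ici] at hx
  have hx' : 2 * a < x := hx
  rw [(g_hasDeriv a ha x).deriv]
  have h1 : (0:ℝ) < Real.exp (-x / a) := Real.exp_pos _
  have h2 : 2 - x / a < 0 := by
    rw [sub_neg, lt_div_iff₀ ha]; nlinarith
  have h3 : 0 < x := by nlinarith
  nlinarith [mul_pos h1 (mul_pos h3 (neg_pos.mpr h2))]

private lemma g_at_2a (a : ℝ) (ha : 0 < a) :
    (2 * a) ^ 2 * Real.exp (-(2 * a) / a) = (2 * a / Real.exp 1) ^ 2 := by
  have h : -(2 * a) / a = -2 := by field_simp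
  rw [h, div_pow]
  have : Real.exp 1 ^ 2 = Real.exp 2 := by
    rw [← Real.exp_nat_mul]; norm_num
  rw [this, Real.exp_neg]
  field_simp

/-- For `φ(s) = C e^{s/a} − s²` with `a, C > 0`: if `C < (2a/e)²` then `φ` has
exactly three zeros `η₁ < 0 < η₂ < 2a < η₃`, while if `C > (2a/e)²` then `φ` has
exactly one zero `η̄ < 0`. -/
theorem phi_zeros (a C : ℝ) (ha : 0 < a) (hC : 0 < C) :
    let φ : ℝ → ℝ := fun s => C * Real.exp (s / a) - s ^ 2
    (C < (2 * a / Real.exp 1) ^ 2 →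
      ∃ η₁ η₂ η₃ : ℝ, η₁ < 0 ∧ 0 < η₂ ∧ η₂ < 2 * a ∧ 2 * a < η₃ ∧
        {s : ℝ | φ s = 0} = {η₁, η₂, η₃}) ∧
    ((2 * a / Real.exp 1) ^ 2 < C →
      ∃ ηb : ℝ, ηb < 0 ∧ {s : ℝ | φ s = 0} = {ηb}) := by
  intro φ
  set g : ℝ → ℝ := fun s => s ^ 2 * Real.exp (-s / a) with hg
  have key : ∀ s : ℝ, φ s = 0 ↔ g s = C := by
    intro s
    have he : Real.exp (s / a) ≠ 0 := (Real.exp_pos _).ne'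
    simp only [φ, hg, sub_eq_zero, neg_div, Real.exp_neg]
    rw [eq_comm (b := C)]
    field_simp
  have hg0 : g 0 = 0 := by simp [hg]
  have hg2a : g (2 * a) = (2 * a / Real.exp 1) ^ 2 := g_at_2a a ha
  -- existence of negative zero
  have hneg : ∃ η : ℝ, η < 0 ∧ g η = C := by
    set x₁ : ℝ := -(Real.sqrt C) - 1 with hx₁
    have hsq := Real.sqrt_nonneg C
    have hx₁neg : x₁ < 0 := by rw [hx₁]; linarith
    have hgx₁ : C < g x₁ := by
      have h1 : C < x₁ ^ 2 := by
        have hs : Real.sqrt C ^ 2 = C := Real.sq_sqrt hC.le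
        nlinarith
      have h2 : (1:ℝ) ≤ Real.exp (-x₁ / a) := by
        apply Real.one_le_exp
        apply div_nonneg (by linarith) ha.le
      calc C < x₁ ^ 2 := h1
        _ = x₁ ^ 2 * 1 := by ring
        _ ≤ x₁ ^ 2 * Real.exp (-x₁ / a) := by nlinarith
    have hsub : Icc (g 0) (g x₁) ⊆ g '' Icc x₁ 0 :=
      intermediate_value_Icc' hx₁neg.le (g_cont a).continuousOn
    have hmem : C ∈ Icc (g 0) (g x₁) := ⟨by rw [hg0]; exact hC.le, hgx₁.le⟩
    obtain ⟨η, hηmem, hηval⟩ := hsub hmem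
    refine ⟨η, ?_, hηval⟩
    rcases lt_or_eq_of_le hηmem.2 with h | h
    · exact h
    · exfalso; rw [h, hg0] at hηval; linarith
  constructor
  · -- case C < (2a/e)²
    intro hClt
    obtain ⟨η₁, hη₁neg, hη₁⟩ := hneg
    -- middle zero
    have hmid : ∃ η : ℝ, 0 < η ∧ η < 2 * a ∧ g η = C := by
      have hsub : Icc (g 0) (g (2 * a)) ⊆ g '' Icc 0 (2 * a) :=
        intermediate_value_Icc (by positivity) (g_cont a).continuousOn
      have hmem : C ∈ Icc (g 0) (g (2 * a)) :=
        ⟨by rw [hg0]; exact hC.le, by rw [hg2a]; exact hClt.le⟩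
      obtain ⟨η, hηmem, hηval⟩ := hsub hmem
      refine ⟨η, ?_, ?_, hηval⟩
      · rcases eq_or_lt_of_le hηmem.1 with h | h
        · exfalso; rw [← h, hg0] at hηval; linarith
        · exact h
      · rcases lt_or_eq_of_le hηmem.2 with h | h
        · exact h
        · exfalso; rw [h, hg2a] at hηval; linarith
    obtain ⟨η₂, hη₂pos, hη₂lt, hη₂⟩ := hmid
    -- right zero: find X > 2a with g X < C
    have htend : Filter.Tendsto g Filter.atTop (nhds 0) := by
      have h1 : Filter.Tendsto (fun x : ℝ => x / a) Filter.atTop Filter.atTop :=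
        Filter.tendsto_id.atTop_div_const ha
      have h2 : Filter.Tendsto (fun y : ℝ => y ^ 2 * Real.exp (-y)) Filter.atTop (nhds 0) := by
        simpa using Real.tendsto_pow_mul_exp_neg_atTop_nhds_zero 2
      have h3 := (h2.comp h1).const_mul (a ^ 2)
      rw [mul_zero] at h3
      convert h3 using 2 with x
      simp only [Function.comp, hg]
      rw [neg_div]
      field_simp
    have hX : ∃ X : ℝ, 2 * a < X ∧ g X < C := by
      have h1 : ∀ᶠ x in Filter.atTop, g x < C :=
        htend.eventually_lt_const hC
      have h2 : ∀ᶠ x : ℝ in Filter.atTop, 2 * a < x := Filter.eventually_gt_atTop _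
      obtain ⟨X, hX1, hX2⟩ := (h1.and h2).exists
      exact ⟨X, hX2, hX1⟩
    obtain ⟨X, hXgt, hXlt⟩ := hX
    have hright : ∃ η : ℝ, 2 * a < η ∧ g η = C := by
      have hsub : Icc (g X) (g (2 * a)) ⊆ g '' Icc (2 * a) X :=
        intermediate_value_Icc' hXgt.le (g_cont a).continuousOn
      have hmem : C ∈ Icc (g X) (g (2 * a)) := ⟨hXlt.le, by rw [hg2a]; exact hClt.le⟩
      obtain ⟨η, hηmem, hηval⟩ := hsub hmem
      refine ⟨η, ?_, hηval⟩
      rcases eq_or_lt_of_le hηmem.1 with h | h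
      · exfalso; rw [← h, hg2a] at hηval; linarith
      · exact h
    obtain ⟨η₃, hη₃gt, hη₃⟩ := hright
    refine ⟨η₁, η₂, η₃, hη₁neg, hη₂pos, hη₂lt, hη₃gt, ?_⟩
    ext s
    simp only [mem_setOf_eq, mem_insert_iff, mem_singleton_iff, key]
    constructor
    · intro hs
      rcases le_total s 0 with h | h
      · left
        exact (g_anti1 a ha).injOn h (le_of_lt hη₁neg) (hs.trans hη₁.symm)
      · rcases le_total s (2 * a) with h' | h'
        · right; left
          exact (g_mono a ha).injOn ⟨h, h'⟩ ⟨hη₂pos.le, hη₂lt.le⟩ (hs.trans hη₂.symm)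
        · right; right
          exact (g_anti2 a ha).injOn h' hη₃gt.le (hs.trans hη₃.symm)
    · rintro (rfl | rfl | rfl) <;> assumption
  · -- case C > (2a/e)²
    intro hCgt
    obtain ⟨ηb, hηbneg, hηb⟩ := hneg
    refine ⟨ηb, hηbneg, ?_⟩
    ext s
    simp only [mem_setOf_eq, mem_singleton_iff, key]
    constructor
    · intro hs
      have hsneg : s < 0 := by
        by_contra hpos
        push_neg at hpos
        have hle : g s ≤ g (2 * a) := by
          rcases le_total s (2 * a) with h' | h'
          · exact (g_mono a ha).monotoneOn ⟨hpos, h'⟩ ⟨by positivity, le_refl _⟩ h'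
          · exact (g_anti2 a ha).antitoneOn (le_refl (2 * a)) h' h'
        rw [hs, hg2a] at hle
        linarith
      exact (g_anti1 a ha).injOn hsneg.le hηbneg.le (hs.trans hηb.symm)
    · rintro rfl; exact hηb
end

section
/- As C_E → 0⁺, the period T_E = (4πC_E/((a₁+a₂)A₁)) ∫_{η₁}^{η₂} e^{x₁/a′}/√(C_E e^{x₁/a′} − x₁²) dx₁ of the closed orbit on the level set with parameter C_E satisfies T_E / C_E → 4π²/((a₁+a₂)A₁); in particular T_E → 0 as C_E → 0. -/
open Real Filter MeasureTheory intervalIntegral Set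

lemma integrable_half : IntervalIntegrable (fun x : ℝ => 1 / Real.sqrt (1 - x^2)) volume 0 1 := by
  have h0 : IntervalIntegrable (fun x : ℝ => x ^ (-(1/2) : ℝ)) volume 0 1 :=
    intervalIntegral.intervalIntegrable_rpow' (by norm_num)
  have h1 : IntervalIntegrable (fun x : ℝ => (1 - x) ^ (-(1/2):ℝ)) volume 0 1 := by
    simpa using (h0.comp_sub_left 1).symm
  apply h1.mono_fun
  · apply Measurable.aestronglyMeasurable
    apply Measurable.div measurable_const
    exact Real.continuous_sqrt.measurable.comp (by fun_prop)
  · filter_upwards [MeasureTheory.self_mem_ae_restrict measurableSet_uIoc] with x hx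
    rw [Set.uIoc_of_le (by norm_num : (0:ℝ) ≤ 1)] at hx
    obtain ⟨hx0, hx1⟩ := hx
    have hle : 1 - x ≤ 1 - x^2 := by nlinarith
    have h1x : (0:ℝ) ≤ 1 - x := by linarith
    rw [Real.norm_eq_abs, Real.norm_eq_abs, abs_of_nonneg (by positivity),
      abs_of_nonneg (Real.rpow_nonneg h1x _)]
    have hrw : (1 - x) ^ (-(1/2):ℝ) = 1 / Real.sqrt (1 - x) := by
      rw [Real.rpow_neg h1x, Real.sqrt_eq_rpow, one_div]; norm_num
    rw [hrw]
    rcases eq_or_lt_of_le hx1 with h | h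
    · subst h; norm_num
    · apply one_div_le_one_div_of_le
      · exact Real.sqrt_pos.2 (by linarith)
      · exact Real.sqrt_le_sqrt hle

lemma integrable_inv_sqrt_one_sub_sq :
    IntervalIntegrable (fun x : ℝ => 1 / Real.sqrt (1 - x^2)) volume (-1) 1 := by
  have h2 : IntervalIntegrable (fun x : ℝ => 1 / Real.sqrt (1 - x^2)) volume (-1) 0 := by
    have h := (IntervalIntegrable.iff_comp_neg (by simp)).mp integrable_half
    have he : (fun x : ℝ => 1 / Real.sqrt (1 - (-x)^2)) = fun x : ℝ => 1 / Real.sqrt (1 - x^2) := by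
      funext x; rw [neg_pow]; norm_num
    rw [he] at h
    simpa using h.symm
  exact h2.trans integrable_half

lemma integral_inv_sqrt_one_sub_sq :
    ∫ x in (-1:ℝ)..1, 1 / Real.sqrt (1 - x^2) = π := by
  have h := intervalIntegral.integral_eq_sub_of_hasDeriv_right_of_le
    (by norm_num : (-1:ℝ) ≤ 1) (Real.continuous_arcsin.continuousOn)
    (fun x hx => (Real.hasDerivAt_arcsin hx.1.ne' hx.2.ne).hasDerivWithinAt)
    integrable_inv_sqrt_one_sub_sq
  rw [h, Real.arcsin_one, Real.arcsin_neg_one]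
  ring

lemma pinv_spec {a b : ℝ} (hab : a < b) :
    IntervalIntegrable (fun s => 1 / Real.sqrt ((s - a) * (b - s))) volume a b ∧
    ∫ s in a..b, 1 / Real.sqrt ((s - a) * (b - s)) = π := by
  set c : ℝ := (b - a) / 2 with hc_def
  set d : ℝ := (a + b) / 2 with hd_def
  have hc : 0 < c := by rw [hc_def]; linarith
  have hcne : c ≠ 0 := hc.ne'
  have key : ∀ s : ℝ, 1 / Real.sqrt ((s - a) * (b - s))
      = c⁻¹ * (1 / Real.sqrt (1 - ((s - d) * c⁻¹)^2)) := by
    intro s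
    have h1 : (s - a) * (b - s) = c^2 * (1 - ((s - d) * c⁻¹)^2) := by
      field_simp
      rw [hc_def, hd_def]; ring
    rw [h1, Real.sqrt_mul (sq_nonneg c), Real.sqrt_sq hc.le, one_div, mul_inv, one_div]
  constructor
  · have s1 := integrable_inv_sqrt_one_sub_sq.comp_mul_right (c := c⁻¹)
    rw [show (-1:ℝ)/c⁻¹ = -c by field_simp, show (1:ℝ)/c⁻¹ = c by field_simp] at s1
    have s2 := s1.comp_sub_right d
    rw [show -c + d = a by rw [hc_def, hd_def]; ring,
      show c + d = b by rw [hc_def, hd_def]; ring] at s2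
    have heq : (fun s => 1 / Real.sqrt ((s - a) * (b - s)))
        = fun s => c⁻¹ * (1 / Real.sqrt (1 - ((s - d) * c⁻¹)^2)) := funext key
    rw [heq]; exact s2.const_mul c⁻¹
  · have h2 := intervalIntegral.integral_comp_mul_add
      (a := -1) (b := 1) (fun s => 1 / Real.sqrt ((s - a) * (b - s))) hcne d
    rw [show c * (-1) + d = a by rw [hc_def, hd_def]; ring,
      show c * 1 + d = b by rw [hc_def, hd_def]; ring] at h2
    have h3 : ∫ x in (-1:ℝ)..1, 1 / Real.sqrt ((c * x + d - a) * (b - (c * x + d)))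
        = c⁻¹ * ∫ x in (-1:ℝ)..1, 1 / Real.sqrt (1 - x^2) := by
      rw [← intervalIntegral.integral_const_mul]
      apply intervalIntegral.integral_congr
      intro x _
      dsimp only
      have h1 : (c * x + d - a) * (b - (c * x + d)) = c^2 * (1 - x^2) := by
        rw [hc_def, hd_def]; ring
      rw [h1, Real.sqrt_mul (sq_nonneg c), Real.sqrt_sq hc.le, one_div, mul_inv, one_div]
    rw [h3, integral_inv_sqrt_one_sub_sq] at h2
    have h4 : c⁻¹ * π = c⁻¹ * ∫ s in a..b, 1 / Real.sqrt ((s - a) * (b - s)) := by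
      rw [h2]; simp [smul_eq_mul]
    exact (mul_left_cancel₀ (inv_ne_zero hcne) h4).symm

lemma concave_aux (a' c q l k : ℝ) (ha' : 0 < a') {D : Set ℝ} (hD : Convex ℝ D)
    (hqq : ∀ x ∈ interior D, c * Real.exp (x / a') / a' ^ 2 + 2 * q ≤ 0) :
    ConcaveOn ℝ D (fun s => c * Real.exp (s / a') + q * s ^ 2 + l * s + k) := by
  have hd : ∀ x : ℝ, HasDerivAt (fun s => c * Real.exp (s / a') + q * s ^ 2 + l * s + k)
      (c * Real.exp (x / a') / a' + (2 * q * x + l)) x := by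
    intro x
    have h1 : HasDerivAt (fun s : ℝ => s / a') (1 / a') x := (hasDerivAt_id x).div_const a'
    have h2 := (h1.exp.const_mul c)
    have h3 : HasDerivAt (fun s : ℝ => q * s ^ 2 + l * s + k) (q * (2 * x) + l) x := by
      have := (((hasDerivAt_pow 2 x).const_mul q).add
        ((hasDerivAt_id x).const_mul l)).add_const k
      exact this.congr_deriv (by simp)
    have := (h2.add h3).congr_deriv (show _ = c * Real.exp (x / a') / a' + (2 * q * x + l) by ring)
    refine this.congr_of_eventuallyEq (Filter.Eventually.of_forall fun s => ?_)
    simp only [Pi.add_apply]; ring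
  have hd2 : ∀ x : ℝ, HasDerivAt (fun y => c * Real.exp (y / a') / a' + (2 * q * y + l))
      (c * Real.exp (x / a') / a' ^ 2 + 2 * q) x := by
    intro x
    have h1 : HasDerivAt (fun s : ℝ => s / a') (1 / a') x := (hasDerivAt_id x).div_const a'
    have h2 := ((h1.exp.const_mul c).div_const a').add
      (((hasDerivAt_id x).const_mul (2 * q)).add_const l)
    exact h2.congr_deriv (by ring)
  apply concaveOn_of_hasDerivWithinAt2_nonpos hD
    (Continuous.continuousOn (by fun_prop))
    (fun x _ => (hd x).hasDerivWithinAt)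
    (fun x hx => (hd2 x).hasDerivWithinAt) hqq

lemma concave_nonneg {φ : ℝ → ℝ} {a b : ℝ} (hab : a < b)
    (hc : ConcaveOn ℝ (Set.Icc a b) φ) (ha : φ a = 0) (hb : φ b = 0) :
    ∀ x ∈ Set.Icc a b, 0 ≤ φ x := by
  intro x hx
  have hba : 0 < b - a := by linarith
  set t : ℝ := (b - x) / (b - a) with ht_def
  have ht0 : 0 ≤ t := div_nonneg (by linarith [hx.2]) hba.le
  have ht1 : 0 ≤ 1 - t := by
    have : t ≤ 1 := by rw [ht_def, div_le_one hba]; linarith [hx.1]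
    linarith
  have hcomb : t • a + (1 - t) • b = x := by
    simp only [smul_eq_mul]; rw [ht_def]; field_simp; ring
  have h := hc.2 (left_mem_Icc.2 hab.le) (right_mem_Icc.2 hab.le) ht0 ht1 (by ring)
  rw [hcomb, ha, hb] at h
  simpa using h

set_option maxHeartbeats 1000000 in
lemma key_tendsto (a' δ : ℝ) (ha' : 0 < a') (hδ : 0 < δ) (η₁ η₂ : ℝ → ℝ)
    (hroots : ∀ C : ℝ, 0 < C → C < δ →
      η₁ C < 0 ∧ 0 < η₂ C ∧
      C * Real.exp (η₁ C / a') - (η₁ C) ^ 2 = 0 ∧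
      C * Real.exp (η₂ C / a') - (η₂ C) ^ 2 = 0 ∧
      (∀ s : ℝ, C * Real.exp (s / a') - s ^ 2 = 0 → η₁ C ≤ s) ∧
      (∀ s : ℝ, C * Real.exp (s / a') - s ^ 2 = 0 → s = η₁ C ∨ η₂ C ≤ s)) :
    Tendsto (fun C => ∫ s in (η₁ C)..(η₂ C),
        Real.exp (s / a') / Real.sqrt (C * Real.exp (s / a') - s ^ 2))
      (nhdsWithin 0 (Set.Ioi 0)) (nhds π) := by
  have ha2 : (0:ℝ) < a' ^ 2 := by positivity
  set δ₀ : ℝ := min δ (min (a' ^ 2 * Real.exp (-2))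
      (min 1 (a' ^ 2 * Real.exp (-(Real.exp 1 / a'))))) with hδ₀_def
  have hδ₀ : 0 < δ₀ := by
    rw [hδ₀_def]
    refine lt_min hδ (lt_min (by positivity) (lt_min one_pos (by positivity)))
  set lo : ℝ → ℝ := fun C => Real.exp (-(Real.sqrt C / a')) * π with hlo_def
  set hi : ℝ → ℝ := fun C => Real.exp (Real.sqrt C * Real.exp 1 / a') /
      Real.sqrt ((2 - C * Real.exp (Real.sqrt C * Real.exp 1 / a') / a' ^ 2) / 2) * π with hhi_def
  have hlo_tendsto : Tendsto lo (nhdsWithin 0 (Set.Ioi 0)) (nhds π) := by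
    have hcont : Continuous lo := by rw [hlo_def]; fun_prop
    have h0 : lo 0 = π := by rw [hlo_def]; simp
    have := (hcont.continuousAt (x := 0)).tendsto
    rw [h0] at this
    exact this.mono_left nhdsWithin_le_nhds
  have hhi_tendsto : Tendsto hi (nhdsWithin 0 (Set.Ioi 0)) (nhds π) := by
    have h1 : ContinuousAt (fun C : ℝ => Real.exp (Real.sqrt C * Real.exp 1 / a')) 0 := by
      fun_prop
    have h2 : ContinuousAt (fun C : ℝ =>
        Real.sqrt ((2 - C * Real.exp (Real.sqrt C * Real.exp 1 / a') / a' ^ 2) / 2)) 0 := by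
      fun_prop
    have h3 : Real.sqrt ((2 - (0:ℝ) * Real.exp (Real.sqrt 0 * Real.exp 1 / a') / a' ^ 2) / 2)
        ≠ 0 := by
      norm_num
    have hca : ContinuousAt hi 0 := by
      rw [hhi_def]
      exact ((h1.div h2 h3).mul continuousAt_const)
    have h0 : hi 0 = π := by rw [hhi_def]; norm_num
    have := hca.tendsto
    rw [h0] at this
    exact this.mono_left nhdsWithin_le_nhds
  have hbound : ∀ C ∈ Ioo (0:ℝ) δ₀,
      lo C ≤ (∫ s in (η₁ C)..(η₂ C),
        Real.exp (s / a') / Real.sqrt (C * Real.exp (s / a') - s ^ 2)) ∧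
      (∫ s in (η₁ C)..(η₂ C),
        Real.exp (s / a') / Real.sqrt (C * Real.exp (s / a') - s ^ 2)) ≤ hi C := by
    intro C hC
    obtain ⟨hC0, hCδ₀⟩ := hC
    have hCδ : C < δ := lt_of_lt_of_le hCδ₀ (min_le_left _ _)
    have hC2 : C < a' ^ 2 * Real.exp (-2) :=
      lt_of_lt_of_le hCδ₀ ((min_le_right _ _).trans (min_le_left _ _))
    have hC1 : C < 1 :=
      lt_of_lt_of_le hCδ₀ ((min_le_right _ _).trans ((min_le_right _ _).trans (min_le_left _ _)))
    have hC3 : C < a' ^ 2 * Real.exp (-(Real.exp 1 / a')) :=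
      lt_of_lt_of_le hCδ₀ ((min_le_right _ _).trans ((min_le_right _ _).trans (min_le_right _ _)))
    obtain ⟨h1, h2, h3, h4, h5, h6⟩ := hroots C hC0 hCδ
    set e₁ := η₁ C with he₁_def
    set e₂ := η₂ C with he₂_def
    have he₁₂ : e₁ < e₂ := h1.trans h2
    have hsC : 0 < Real.sqrt C := Real.sqrt_pos.2 hC0
    have hsqC : Real.sqrt C ^ 2 = C := Real.sq_sqrt hC0.le
    -- e₁ > -√C
    have hA : e₁ ^ 2 < C := by
      have hexp1 : Real.exp (e₁ / a') < 1 := by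
        rw [Real.exp_lt_one_iff]
        exact div_neg_of_neg_of_pos h1 ha'
      nlinarith [Real.exp_pos (e₁ / a')]
    have hA2 : -(Real.sqrt C) < e₁ := by nlinarith
    -- e₂ ≤ √C * e
    have hB : e₂ ≤ Real.sqrt C * Real.exp 1 := by
      have h2a' : (0:ℝ) ≤ 2 * a' := by linarith
      have hivt := intermediate_value_Ioc (f := fun s : ℝ => s ^ 2 * Real.exp (-(s / a')))
        h2a' (by fun_prop)
      have hmem : C ∈ Ioc ((fun s : ℝ => s ^ 2 * Real.exp (-(s / a'))) 0)
          ((fun s : ℝ => s ^ 2 * Real.exp (-(s / a'))) (2 * a')) := by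
        constructor
        · simpa using hC0
        · have : (2 * a') ^ 2 * Real.exp (-(2 * a' / a')) = 4 * a' ^ 2 * Real.exp (-2) := by
            rw [show 2 * a' / a' = 2 by field_simp]
            ring
          simp only [this]
          nlinarith [Real.exp_pos (-2:ℝ)]
      obtain ⟨r, hrmem, hr⟩ := hivt hmem
      have hroot : C * Real.exp (r / a') - r ^ 2 = 0 := by
        simp only at hr
        rw [← hr, mul_assoc, ← Real.exp_add, neg_add_cancel, Real.exp_zero, mul_one, sub_self]
      have hre₂ : e₂ ≤ r := by
        rcases h6 r hroot with hre | hre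
        · exfalso; rw [hre] at hrmem; exact absurd hrmem.1 (not_lt.2 h1.le)
        · exact hre
      have hr2a' : r ≤ 2 * a' := hrmem.2
      have he₂2a' : e₂ ≤ 2 * a' := hre₂.trans hr2a'
      have hexpb : Real.exp (e₂ / a') ≤ Real.exp 2 := by
        apply Real.exp_le_exp.2
        rw [div_le_iff₀ ha']
        linarith
      have he₂sq : e₂ ^ 2 ≤ C * Real.exp 1 ^ 2 := by
        have h4' : e₂ ^ 2 = C * Real.exp (e₂ / a') := by linarith [h4]
        rw [h4']
        have : Real.exp 2 = Real.exp 1 ^ 2 := by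
          rw [sq, ← Real.exp_add]; norm_num
        nlinarith
      have := Real.sqrt_le_sqrt he₂sq
      rwa [Real.sqrt_sq h2.le, Real.sqrt_mul hC0.le, Real.sqrt_sq (Real.exp_pos 1).le] at this
    set m : ℝ := Real.exp (-(Real.sqrt C / a')) with hm_def
    set M : ℝ := Real.exp (Real.sqrt C * Real.exp 1 / a') with hM_def
    have hm0 : 0 < m := Real.exp_pos _
    have hM0 : 0 < M := Real.exp_pos _
    have hmb : ∀ x : ℝ, e₁ ≤ x → m ≤ Real.exp (x / a') := by
      intro x hx
      rw [hm_def]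
      apply Real.exp_le_exp.2
      rw [← neg_div]
      gcongr
      linarith
    have hMb : ∀ x : ℝ, x ≤ e₂ → Real.exp (x / a') ≤ M := by
      intro x hx
      rw [hM_def]
      apply Real.exp_le_exp.2
      gcongr
      linarith
    set α : ℝ := 2 - C * M / a' ^ 2 with hα_def
    have hα : 1 < α := by
      have hsC1 : Real.sqrt C ≤ 1 := by
        rw [show (1:ℝ) = Real.sqrt 1 by simp]
        exact Real.sqrt_le_sqrt hC1.le
      have hMle : M ≤ Real.exp (Real.exp 1 / a') := by
        rw [hM_def]
        apply Real.exp_le_exp.2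
        have hnum : Real.sqrt C * Real.exp 1 ≤ Real.exp 1 :=
          mul_le_of_le_one_left (Real.exp_pos 1).le hsC1
        exact (div_le_div_iff_of_pos_right ha').2 hnum
      have hCM : C * M < a' ^ 2 := by
        have step1 : C * M ≤ C * Real.exp (Real.exp 1 / a') :=
          mul_le_mul_of_nonneg_left hMle hC0.le
        have step2 : C * Real.exp (Real.exp 1 / a')
            < a' ^ 2 * Real.exp (-(Real.exp 1 / a')) * Real.exp (Real.exp 1 / a') :=
          mul_lt_mul_of_pos_right hC3 (Real.exp_pos _)
        calc C * M ≤ C * Real.exp (Real.exp 1 / a') := step1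
          _ < a' ^ 2 * Real.exp (-(Real.exp 1 / a')) * Real.exp (Real.exp 1 / a') := step2
          _ = a' ^ 2 := by rw [mul_assoc, ← Real.exp_add, neg_add_cancel, Real.exp_zero, mul_one]
      rw [hα_def]
      rw [lt_sub_iff_add_lt]
      have : C * M / a' ^ 2 < 1 := by rwa [div_lt_one ha2]
      linarith
    have hα2 : 0 < α / 2 := div_pos (by linarith) two_pos
    -- positivity of F on the open interval
    have hFc : Continuous (fun s : ℝ => C * Real.exp (s / a') - s ^ 2) := by fun_prop
    have hF0 : C * Real.exp ((0:ℝ) / a') - (0:ℝ) ^ 2 = C := by simp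
    have hFpos : ∀ x ∈ Ioo e₁ e₂, 0 < C * Real.exp (x / a') - x ^ 2 := by
      intro x hx
      by_contra hle
      push_neg at hle
      rcases eq_or_lt_of_le hle with heq | hlt
      · rcases h6 x heq with hxe | hxe
        · exact absurd hxe (ne_of_gt hx.1)
        · exact absurd hxe (not_le.2 hx.2)
      · rcases lt_trichotomy x 0 with hx0 | hx0 | hx0
        · have hsub := intermediate_value_Ioo (f := fun s : ℝ => C * Real.exp (s / a') - s ^ 2)
            hx0.le hFc.continuousOn
          have h0mem : (0:ℝ) ∈ Ioo (C * Real.exp (x / a') - x ^ 2)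
              (C * Real.exp ((0:ℝ) / a') - (0:ℝ) ^ 2) := by
            rw [hF0]; exact ⟨hlt, hC0⟩
          obtain ⟨y, hy, hy0⟩ := hsub h0mem
          rcases h6 y hy0 with hye | hye
          · have : e₁ < y := lt_trans hx.1 hy.1
            rw [hye] at this; exact lt_irrefl _ this
          · have : y < e₂ := lt_trans hy.2 h2
            linarith
        · rw [hx0] at hlt
          rw [hF0] at hlt; linarith
        · have hsub := intermediate_value_Ioo' (f := fun s : ℝ => C * Real.exp (s / a') - s ^ 2)
            hx0.le hFc.continuousOn
          have h0mem : (0:ℝ) ∈ Ioo (C * Real.exp (x / a') - x ^ 2)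
              (C * Real.exp ((0:ℝ) / a') - (0:ℝ) ^ 2) := by
            rw [hF0]; exact ⟨hlt, hC0⟩
          obtain ⟨y, hy, hy0⟩ := hsub h0mem
          rcases h6 y hy0 with hye | hye
          · have : e₁ < y := lt_trans h1 hy.1
            rw [hye] at this; exact lt_irrefl _ this
          · have : y < e₂ := lt_trans hy.2 hx.2
            linarith
    -- F ≤ P on Icc
    have hFP : ∀ x ∈ Icc e₁ e₂, C * Real.exp (x / a') - x ^ 2 ≤ (x - e₁) * (e₂ - x) := by
      have hconc : ConcaveOn ℝ (Icc e₁ e₂)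
          (fun s => (-C) * Real.exp (s / a') + 0 * s ^ 2 + (e₁ + e₂) * s + (-(e₁ * e₂))) := by
        apply concave_aux a' (-C) 0 (e₁ + e₂) (-(e₁ * e₂)) ha' (convex_Icc _ _)
        intro x _
        have := Real.exp_pos (x / a')
        have : (-C) * Real.exp (x / a') / a' ^ 2 ≤ 0 := by
          apply div_nonpos_of_nonpos_of_nonneg
          · nlinarith
          · positivity
        linarith
      have hz1 : (-C) * Real.exp (e₁ / a') + 0 * e₁ ^ 2 + (e₁ + e₂) * e₁ + (-(e₁ * e₂)) = 0 := by
        linear_combination -h3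
      have hz2 : (-C) * Real.exp (e₂ / a') + 0 * e₂ ^ 2 + (e₁ + e₂) * e₂ + (-(e₁ * e₂)) = 0 := by
        linear_combination -h4
      intro x hx
      have := concave_nonneg he₁₂ hconc hz1 hz2 x hx
      nlinarith [this]
    -- α/2 * P ≤ F on Icc
    have hPF : ∀ x ∈ Icc e₁ e₂, α / 2 * ((x - e₁) * (e₂ - x)) ≤ C * Real.exp (x / a') - x ^ 2 := by
      have hconc : ConcaveOn ℝ (Icc e₁ e₂)
          (fun s => C * Real.exp (s / a') + (α / 2 - 1) * s ^ 2
            + (-(α / 2) * (e₁ + e₂)) * s + (α / 2 * (e₁ * e₂))) := by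
        apply concave_aux a' C (α / 2 - 1) (-(α / 2) * (e₁ + e₂)) (α / 2 * (e₁ * e₂)) ha'
          (convex_Icc _ _)
        intro x hx
        rw [interior_Icc] at hx
        have hMx := hMb x hx.2.le
        have hdiv : C * Real.exp (x / a') / a' ^ 2 ≤ C * M / a' ^ 2 := by
          exact (div_le_div_iff_of_pos_right ha2).2 (mul_le_mul_of_nonneg_left hMx hC0.le)
        rw [hα_def]
        linarith
      have hz1 : C * Real.exp (e₁ / a') + (α / 2 - 1) * e₁ ^ 2
          + (-(α / 2) * (e₁ + e₂)) * e₁ + (α / 2 * (e₁ * e₂)) = 0 := by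
        linear_combination h3
      have hz2 : C * Real.exp (e₂ / a') + (α / 2 - 1) * e₂ ^ 2
          + (-(α / 2) * (e₁ + e₂)) * e₂ + (α / 2 * (e₁ * e₂)) = 0 := by
        linear_combination h4
      intro x hx
      have := concave_nonneg he₁₂ hconc hz1 hz2 x hx
      nlinarith [this]
    obtain ⟨hPint, hPval⟩ := pinv_spec he₁₂
    have hsα : 0 < Real.sqrt (α / 2) := Real.sqrt_pos.2 hα2
    -- pointwise lower bound
    have hlow : ∀ x ∈ Icc e₁ e₂, m * (1 / Real.sqrt ((x - e₁) * (e₂ - x)))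
        ≤ Real.exp (x / a') / Real.sqrt (C * Real.exp (x / a') - x ^ 2) := by
      intro x hx
      rcases eq_or_lt_of_le hx.1 with heq | hlt1
      · rw [← heq]; simp; positivity
      rcases eq_or_lt_of_le hx.2 with heq2 | hlt2
      · rw [heq2]; simp; positivity
      have hP : 0 < (x - e₁) * (e₂ - x) := mul_pos (by linarith) (by linarith)
      have hF : 0 < C * Real.exp (x / a') - x ^ 2 := hFpos x ⟨hlt1, hlt2⟩
      have hsqle : Real.sqrt (C * Real.exp (x / a') - x ^ 2)
          ≤ Real.sqrt ((x - e₁) * (e₂ - x)) := Real.sqrt_le_sqrt (hFP x hx)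
      have h' : m * (1 / Real.sqrt ((x - e₁) * (e₂ - x)))
          ≤ Real.exp (x / a') * (1 / Real.sqrt (C * Real.exp (x / a') - x ^ 2)) :=
        mul_le_mul (hmb x hx.1)
          (one_div_le_one_div_of_le (Real.sqrt_pos.2 hF) hsqle)
          (by positivity) (Real.exp_pos _).le
      exact h'.trans_eq (mul_one_div _ _)
    -- pointwise upper bound
    have hup : ∀ x ∈ Icc e₁ e₂,
        Real.exp (x / a') / Real.sqrt (C * Real.exp (x / a') - x ^ 2)
        ≤ (M / Real.sqrt (α / 2)) * (1 / Real.sqrt ((x - e₁) * (e₂ - x))) := by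
      intro x hx
      rcases eq_or_lt_of_le hx.1 with heq | hlt1
      · rw [← heq, h3]; simp
      rcases eq_or_lt_of_le hx.2 with heq2 | hlt2
      · rw [heq2, h4]; simp
      have hP : 0 < (x - e₁) * (e₂ - x) := mul_pos (by linarith) (by linarith)
      have hsP : 0 < Real.sqrt ((x - e₁) * (e₂ - x)) := Real.sqrt_pos.2 hP
      have hsqle : Real.sqrt (α / 2) * Real.sqrt ((x - e₁) * (e₂ - x))
          ≤ Real.sqrt (C * Real.exp (x / a') - x ^ 2) := by
        rw [← Real.sqrt_mul hα2.le]
        exact Real.sqrt_le_sqrt (hPF x hx)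
      have step : Real.exp (x / a') / Real.sqrt (C * Real.exp (x / a') - x ^ 2)
          ≤ M / (Real.sqrt (α / 2) * Real.sqrt ((x - e₁) * (e₂ - x))) :=
        div_le_div₀ hM0.le (hMb x hx.2) (mul_pos hsα hsP) hsqle
      refine step.trans (le_of_eq ?_)
      field_simp
    -- measurability of the integrand
    have hGmeas : AEStronglyMeasurable
        (fun s => Real.exp (s / a') / Real.sqrt (C * Real.exp (s / a') - s ^ 2))
        (volume.restrict (Set.uIoc e₁ e₂)) := by
      apply Measurable.aestronglyMeasurable
      apply Measurable.div
      · fun_prop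
      · exact Real.continuous_sqrt.measurable.comp (by fun_prop)
    -- integrability of the integrand
    have hGint : IntervalIntegrable
        (fun s => Real.exp (s / a') / Real.sqrt (C * Real.exp (s / a') - s ^ 2))
        volume e₁ e₂ := by
      apply (hPint.const_mul (M / Real.sqrt (α / 2))).mono_fun hGmeas
      filter_upwards [MeasureTheory.self_mem_ae_restrict measurableSet_uIoc] with x hx
      have hx' : x ∈ Icc e₁ e₂ := by
        rw [Set.uIoc_of_le he₁₂.le] at hx
        exact ⟨hx.1.le, hx.2⟩
      rw [Real.norm_eq_abs, Real.norm_eq_abs, abs_of_nonneg (by positivity),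
        abs_of_nonneg (by positivity)]
      exact hup x hx'
    have hlowint : m * π ≤ ∫ s in e₁..e₂,
        Real.exp (s / a') / Real.sqrt (C * Real.exp (s / a') - s ^ 2) := by
      have := intervalIntegral.integral_mono_on he₁₂.le (hPint.const_mul m) hGint hlow
      rwa [intervalIntegral.integral_const_mul, hPval] at this
    have hupint : (∫ s in e₁..e₂,
        Real.exp (s / a') / Real.sqrt (C * Real.exp (s / a') - s ^ 2))
        ≤ M / Real.sqrt (α / 2) * π := by
      have := intervalIntegral.integral_mono_on he₁₂.le hGint
        (hPint.const_mul (M / Real.sqrt (α / 2))) hup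
      rwa [intervalIntegral.integral_const_mul, hPval] at this
    constructor
    · exact hlowint
    · refine hupint.trans (le_of_eq ?_)
      rw [hhi_def]
  exact tendsto_of_tendsto_of_tendsto_of_le_of_le' hlo_tendsto hhi_tendsto
    (by filter_upwards [Ioo_mem_nhdsGT hδ₀] with C hC
        exact (hbound C hC).1)
    (by filter_upwards [Ioo_mem_nhdsGT hδ₀] with C hC
        exact (hbound C hC).2)

/-- As `C_E → 0⁺`, the period
`T_E = (4πC_E/((a₁+a₂)A₁)) ∫_{η₁}^{η₂} e^{s/a′}/√(C_E e^{s/a′} − s²) ds`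
of the closed orbit satisfies `T_E/C_E → 4π²/((a₁+a₂)A₁)`; in particular
`T_E → 0` as `C_E → 0`. -/
theorem period_limit (a' A₁ a₁ a₂ δ : ℝ) (ha' : 0 < a') (hA : 0 < A₁)
    (hsum : 0 < a₁ + a₂) (hδ : 0 < δ) (η₁ η₂ : ℝ → ℝ)
    (hroots : ∀ C : ℝ, 0 < C → C < δ →
      η₁ C < 0 ∧ 0 < η₂ C ∧
      C * Real.exp (η₁ C / a') - (η₁ C) ^ 2 = 0 ∧
      C * Real.exp (η₂ C / a') - (η₂ C) ^ 2 = 0 ∧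
      (∀ s : ℝ, C * Real.exp (s / a') - s ^ 2 = 0 → η₁ C ≤ s) ∧
      (∀ s : ℝ, C * Real.exp (s / a') - s ^ 2 = 0 → s = η₁ C ∨ η₂ C ≤ s)) :
    let T : ℝ → ℝ := fun C => (4 * π * C / ((a₁ + a₂) * A₁)) *
      ∫ s in (η₁ C)..(η₂ C),
        Real.exp (s / a') / Real.sqrt (C * Real.exp (s / a') - s ^ 2)
    Tendsto (fun C => T C / C) (nhdsWithin 0 (Set.Ioi 0))
      (nhds (4 * π ^ 2 / ((a₁ + a₂) * A₁))) ∧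
    Tendsto T (nhdsWithin 0 (Set.Ioi 0)) (nhds 0) := by
  intro T
  have hK : ((a₁ + a₂) * A₁) ≠ 0 := by positivity
  have hI := key_tendsto a' δ ha' hδ η₁ η₂ hroots
  have heq : ∀ᶠ C in nhdsWithin (0:ℝ) (Set.Ioi 0),
      (4 * π / ((a₁ + a₂) * A₁)) * (∫ s in (η₁ C)..(η₂ C),
        Real.exp (s / a') / Real.sqrt (C * Real.exp (s / a') - s ^ 2)) = T C / C := by
    filter_upwards [self_mem_nhdsWithin] with C hC
    have hC0 : C ≠ 0 := ne_of_gt hC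
    show _ = (4 * π * C / ((a₁ + a₂) * A₁)) * (∫ s in (η₁ C)..(η₂ C),
        Real.exp (s / a') / Real.sqrt (C * Real.exp (s / a') - s ^ 2)) / C
    generalize (∫ s in (η₁ C)..(η₂ C),
        Real.exp (s / a') / Real.sqrt (C * Real.exp (s / a') - s ^ 2)) = I
    field_simp
  have h1 : Tendsto (fun C => T C / C) (nhdsWithin 0 (Set.Ioi 0))
      (nhds (4 * π ^ 2 / ((a₁ + a₂) * A₁))) := by
    have h2 := hI.const_mul (4 * π / ((a₁ + a₂) * A₁))
    have h3 : (4 * π / ((a₁ + a₂) * A₁)) * π = 4 * π ^ 2 / ((a₁ + a₂) * A₁) := by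
      field_simp
    rw [h3] at h2
    exact h2.congr' heq
  refine ⟨h1, ?_⟩
  have hid : Tendsto (fun C : ℝ => C) (nhdsWithin 0 (Set.Ioi 0)) (nhds 0) :=
    tendsto_id.mono_right nhdsWithin_le_nhds
  have h4 := hid.mul h1
  rw [zero_mul] at h4
  apply h4.congr'
  filter_upwards [self_mem_nhdsWithin] with C hC
  have hC0 : C ≠ 0 := ne_of_gt hC
  rw [mul_comm, div_mul_cancel₀ _ hC0]
end
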